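/- The improper integral ∫₀^∞ wᵀ A e^{As} e_1 (1 − e^{−2λ_r s}) ds converges and equals 1 − wᵀ A (2λ_r I − A)^{−1} e_1. -/

import Mathlib

open Matrix MeasureTheory


noncomputable def pvec {N : ℕ} (A : Matrix (Fin N) (Fin N) ℝ) (e1 : Fin N → ℝ) (s : ℝ) :
    Fin N → ℝ := NormedSpace.exp (s • A) *ᵥ e1

lemma dot_exp_hasDerivAt {N : ℕ} (A : Matrix (Fin N) (Fin N) ℝ)
    (u e1 : Fin N → ℝ) (s : ℝ) :
    HasDerivAt (fun t : ℝ => u ⬝ᵥ pvec A e1 t) (u ⬝ᵥ (A *ᵥ pvec A e1 s)) s := by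
  letI : SeminormedRing (Matrix (Fin N) (Fin N) ℝ) := Matrix.linftyOpSemiNormedRing
  letI : NormedRing (Matrix (Fin N) (Fin N) ℝ) := Matrix.linftyOpNormedRing
  letI : NormedAlgebra ℝ (Matrix (Fin N) (Fin N) ℝ) := Matrix.linftyOpNormedAlgebra
  have hexp := hasDerivAt_exp_smul_const' (𝕂 := ℝ) A s
  let L : Matrix (Fin N) (Fin N) ℝ →ₗ[ℝ] ℝ :=
    { toFun := fun M => u ⬝ᵥ (M *ᵥ e1)
      map_add' := by intro M M'; simp [Matrix.add_mulVec, dotProduct_add]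
      map_smul' := by intro c M; simp [Matrix.smul_mulVec, dotProduct_smul] }
  have hL : HasFDerivAt L (L.toContinuousLinearMap) (NormedSpace.exp (s • A)) :=
    L.toContinuousLinearMap.hasFDerivAt
  have := hL.comp_hasDerivAt s hexp
  refine this.congr_deriv ?_
  show u ⬝ᵥ ((A * NormedSpace.exp (s • A)) *ᵥ e1) = _
  simp [pvec, Matrix.mulVec_mulVec]

lemma pk_hasDerivAt {N : ℕ} (A : Matrix (Fin N) (Fin N) ℝ) (e1 : Fin N → ℝ) (k : Fin N) (s : ℝ) :
    HasDerivAt (fun t : ℝ => pvec A e1 t k) ((A *ᵥ pvec A e1 s) k) s := by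
  have := dot_exp_hasDerivAt A (Pi.single k 1) e1 s
  simpa [single_dotProduct] using this

lemma pk_continuous {N : ℕ} (A : Matrix (Fin N) (Fin N) ℝ) (e1 : Fin N → ℝ) (k : Fin N) :
    Continuous (fun t : ℝ => pvec A e1 t k) := by
  have : Differentiable ℝ (fun t : ℝ => pvec A e1 t k) :=
    fun s => (pk_hasDerivAt A e1 k s).differentiableAt
  exact this.continuous

lemma pvec_zero {N : ℕ} (A : Matrix (Fin N) (Fin N) ℝ) (e1 : Fin N → ℝ) :
    pvec A e1 0 = e1 := by
  simp [pvec, NormedSpace.exp_zero, Matrix.one_mulVec]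

lemma integral_exp_mul_eq (c : ℝ) (hc : c ≠ 0) (s : ℝ) :
    ∫ t in (0:ℝ)..s, Real.exp (c*t) = (Real.exp (c*s) - 1)/c := by
  have h : ∀ t ∈ Set.uIcc (0:ℝ) s, HasDerivAt (fun t => Real.exp (c*t)/c) (Real.exp (c*t)) t := by
    intro t _
    have h1 : HasDerivAt (fun t : ℝ => c * t) c t := by
      simpa using (hasDerivAt_id t).const_mul c
    have := (Real.hasDerivAt_exp (c*t)).comp t h1
    have h2 := this.div_const c
    simpa [mul_div_assoc, mul_div_cancel_right₀ _ hc] using h2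
  rw [intervalIntegral.integral_eq_sub_of_hasDerivAt h
    ((Real.continuous_exp.comp (continuous_const.mul continuous_id)).intervalIntegrable 0 s)]
  rw [mul_zero, Real.exp_zero]
  ring


section
variable {N : ℕ} (lc : ℝ) (A : Matrix (Fin N) (Fin N) ℝ)
    (hA : ∀ i j : Fin N, A i j =
      if (i : ℕ) = (j : ℕ) then
        -((((i : ℕ) : ℝ) + 1) * ((N : ℝ) - (((i : ℕ) : ℝ) + 1)) * lc)
      else if (i : ℕ) = (j : ℕ) + 1 then
        (((j : ℕ) : ℝ) + 1) * ((N : ℝ) - (((j : ℕ) : ℝ) + 1)) * lc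
      else 0)

/-- ν n -/
noncomputable def nu (N : ℕ) (lc : ℝ) (n : ℕ) : ℝ := ((n : ℝ) + 1) * ((N : ℝ) - ((n : ℝ) + 1)) * lc

include hA in
lemma Asplit (k j : Fin N) :
    A k j = (if j = k then -(nu N lc k) else 0) + (if (k : ℕ) = (j : ℕ) + 1 then nu N lc j else 0) := by
  rw [hA k j]
  rcases eq_or_ne j k with rfl | hjk
  · have h1 : (j:ℕ) ≠ (j:ℕ) + 1 := by omega
    simp [nu, h1]
  · have : (k : ℕ) ≠ (j : ℕ) := fun h => hjk (Fin.ext h.symm)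
    simp [this, hjk, nu]

include hA in
lemma row_zero (x : Fin N → ℝ) (k : Fin N) (hk : (k : ℕ) = 0) :
    (A *ᵥ x) k = -(nu N lc 0) * x k := by
  have : ∀ j, A k j * x j = (if j = k then -(nu N lc k) * x j else 0) := by
    intro j
    rw [Asplit lc A hA k j]
    rcases eq_or_ne j k with rfl | hjk
    · simp [hk]
    · simp [hjk, hk]
  simp only [Matrix.mulVec, dotProduct, this]
  rw [Finset.sum_ite_eq' Finset.univ k, if_pos (Finset.mem_univ k), hk]

include hA in
lemma row_succ (x : Fin N → ℝ) (k : Fin N) (n : ℕ) (hk : (k : ℕ) = n + 1)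
    (hn : n < N) :
    (A *ᵥ x) k = -(nu N lc (n+1)) * x k + nu N lc n * x ⟨n, hn⟩ := by
  set j0 : Fin N := ⟨n, hn⟩ with hj0
  have : ∀ j, A k j * x j =
      (if j = k then -(nu N lc k) * x j else 0) + (if j = j0 then nu N lc n * x j else 0) := by
    intro j
    rw [Asplit lc A hA k j, add_mul]
    congr 1
    · rcases eq_or_ne j k with rfl | hjk
      · simp
      · simp [hjk]
    · rcases eq_or_ne j j0 with rfl | hj
      · simp [hk, hj0]
      · have h2 : (k : ℕ) ≠ (j : ℕ) + 1 := by
          intro h; apply hj; apply Fin.ext; simp [hj0]; omega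
        simp [h2, hj]
  simp only [Matrix.mulVec, dotProduct, this, Finset.sum_add_distrib]
  rw [Finset.sum_ite_eq' Finset.univ k, Finset.sum_ite_eq' Finset.univ j0]
  simp [hk, hj0]

include hA in
lemma colsum (j : Fin N) : ∑ k, A k j = 0 := by
  have : ∀ k, A k j = (if k = j then -(nu N lc j) else 0) + (if (k : ℕ) = (j : ℕ) + 1 then nu N lc j else 0) := by
    intro k
    rw [Asplit lc A hA k j]
    congr 1
    rcases eq_or_ne k j with rfl | hkj
    · simp
    · have : j ≠ k := Ne.symm hkj
      simp [this, hkj]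
  simp only [this, Finset.sum_add_distrib]
  rw [Finset.sum_ite_eq' Finset.univ j, if_pos (Finset.mem_univ j)]
  by_cases h : (j : ℕ) + 1 < N
  · have : ∀ k : Fin N, ((k : ℕ) = (j : ℕ) + 1) ↔ k = (⟨(j:ℕ)+1, h⟩ : Fin N) := by
      intro k; constructor
      · intro hh; exact Fin.ext hh
      · intro hh; rw [hh]
    simp_rw [this]
    rw [Finset.sum_ite_eq' Finset.univ (⟨(j:ℕ)+1, h⟩ : Fin N), if_pos (Finset.mem_univ _)]
    ring
  · have hj1 : (j : ℕ) + 1 = N := by omega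
    have : ∀ k : Fin N, ¬((k : ℕ) = (j : ℕ) + 1) := by intro k hk; omega
    simp only [this, if_false, Finset.sum_const_zero, add_zero]
    have hN : ((N:ℝ)) = ((j:ℕ):ℝ) + 1 := by exact_mod_cast hj1.symm
    have : nu N lc j = 0 := by rw [nu, hN]; ring
    rw [this, neg_zero]

end


lemma nu_nonneg {N n : ℕ} {lc : ℝ} (hlc : 0 < lc) (hn : n < N) : 0 ≤ nu N lc n := by
  have h1 : ((n:ℝ)+1) ≤ (N:ℝ) := by exact_mod_cast hn
  have h2 : (0:ℝ) ≤ (n:ℝ)+1 := by positivity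
  apply mul_nonneg (mul_nonneg h2 (by linarith)) hlc.le

lemma nu_ge {N n : ℕ} {lc : ℝ} (hlc : 0 < lc) (hn : n + 1 < N) :
    ((N:ℝ) - 1) * lc ≤ nu N lc n := by
  have h1 : ((n:ℝ)+1) + 1 ≤ (N:ℝ) := by exact_mod_cast hn
  have h2 : (0:ℝ) ≤ (n:ℝ) := Nat.cast_nonneg n
  rw [nu]
  have key : ((N:ℝ) - 1) ≤ ((n:ℝ)+1) * ((N:ℝ) - ((n:ℝ)+1)) := by nlinarith
  nlinarith

lemma lam'_pos {N : ℕ} {lc : ℝ} (hlc : 0 < lc) (hN : 2 ≤ N) :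
    0 < ((N:ℝ) - 1) * lc / 2 := by
  have : (2:ℝ) ≤ (N:ℝ) := by exact_mod_cast hN
  have h1 : (0:ℝ) < (N:ℝ) - 1 := by linarith
  positivity


section Decay
variable {N : ℕ} {lc : ℝ} (A : Matrix (Fin N) (Fin N) ℝ)
    (hA : ∀ i j : Fin N, A i j =
      if (i : ℕ) = (j : ℕ) then
        -((((i : ℕ) : ℝ) + 1) * ((N : ℝ) - (((i : ℕ) : ℝ) + 1)) * lc)
      else if (i : ℕ) = (j : ℕ) + 1 then
        (((j : ℕ) : ℝ) + 1) * ((N : ℝ) - (((j : ℕ) : ℝ) + 1)) * lc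
      else 0)
    (e1 : Fin N → ℝ) (he1 : ∀ j : Fin N, e1 j = if (j : ℕ) = 0 then 1 else 0)
    (hN : 2 ≤ N) (hlc : 0 < lc)

include hA he1 hN hlc in
lemma decay : ∀ k : Fin N, ∃ C : ℝ, 0 ≤ C ∧ ((k:ℕ) < N - 1 → ∀ s : ℝ, 0 ≤ s →
    |pvec A e1 s k| ≤ C * Real.exp (-(((N:ℝ)-1)*lc/2) * s)) := by
  set lam' : ℝ := ((N:ℝ)-1)*lc/2 with hlam'
  have hlam'pos : 0 < lam' := lam'_pos hlc hN
  suffices H : ∀ n : ℕ, ∀ k : Fin N, (k:ℕ) = n → ∃ C : ℝ, 0 ≤ C ∧ ((k:ℕ) < N - 1 → ∀ s : ℝ, 0 ≤ s →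
      |pvec A e1 s k| ≤ C * Real.exp (-lam' * s)) by
    intro k; exact H (k:ℕ) k rfl
  intro n
  induction n with
  | zero =>
    intro k hk
    refine ⟨1, zero_le_one, fun _ s hs => ?_⟩
    -- solve the ODE for p_0
    have hode : ∀ t : ℝ, HasDerivAt (fun t => pvec A e1 t k) (-(nu N lc 0) * pvec A e1 t k) t := by
      intro t
      have h := pk_hasDerivAt A e1 k t
      rwa [row_zero lc A hA _ k hk] at h
    have hg : ∀ t : ℝ, HasDerivAt (fun t => Real.exp (nu N lc 0 * t) * pvec A e1 t k) 0 t := by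
      intro t
      have hexp : HasDerivAt (fun t : ℝ => Real.exp (nu N lc 0 * t))
          (nu N lc 0 * Real.exp (nu N lc 0 * t)) t := by
        have h1 : HasDerivAt (fun t : ℝ => nu N lc 0 * t) (nu N lc 0) t := by
          simpa using (hasDerivAt_id t).const_mul (nu N lc 0)
        simpa [mul_comm, Function.comp_def] using (Real.hasDerivAt_exp _).comp t h1
      have := hexp.mul (hode t)
      refine this.congr_deriv (Eq.symm ?_)
      ring
    have hconst : ∀ t : ℝ, Real.exp (nu N lc 0 * t) * pvec A e1 t k = 1 := by
      intro t
      have h1 : Real.exp (nu N lc 0 * t) * pvec A e1 t k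
          = Real.exp (nu N lc 0 * 0) * pvec A e1 0 k :=
        is_const_of_deriv_eq_zero (fun s => (hg s).differentiableAt)
          (fun s => (hg s).deriv) t 0
      rw [h1, pvec_zero, he1 k, if_pos hk]
      simp
    have hval : pvec A e1 s k = Real.exp (-(nu N lc 0 * s)) := by
      have := hconst s
      have hepos := Real.exp_pos (nu N lc 0 * s)
      calc pvec A e1 s k = Real.exp (-(nu N lc 0 * s)) * (Real.exp (nu N lc 0 * s) * pvec A e1 s k) := by
            rw [← mul_assoc, ← Real.exp_add, neg_add_cancel, Real.exp_zero, one_mul]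
        _ = Real.exp (-(nu N lc 0 * s)) := by rw [this, mul_one]
    rw [hval, one_mul, abs_of_pos (Real.exp_pos _), Real.exp_le_exp]
    have hnu0 : nu N lc 0 = ((N:ℝ)-1)*lc := by rw [nu]; push_cast; ring
    have : lam' ≤ nu N lc 0 := by rw [hnu0, hlam']; linarith
    nlinarith
  | succ n ih =>
    intro k hk
    by_cases hlt : (k:ℕ) < N - 1
    · have hnN : n + 1 + 1 < N := by omega
      have hnN' : n < N := by omega
      set j0 : Fin N := ⟨n, hnN'⟩ with hj0
      obtain ⟨C, hC0, hCb⟩ := ih j0 rfl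
      have hbound := hCb (by simp [hj0]; omega)
      set vk := nu N lc (n+1) with hvk
      set vn := nu N lc n with hvn
      have hvk_ge : ((N:ℝ)-1)*lc ≤ vk := nu_ge hlc hnN
      have hvklam : lam' < vk := by rw [hlam'] at *; nlinarith [lam'_pos hlc hN]
      have hvn0 : 0 ≤ vn := nu_nonneg hlc hnN'
      have hode : ∀ t : ℝ, HasDerivAt (fun t => pvec A e1 t k)
          (-vk * pvec A e1 t k + vn * pvec A e1 t j0) t := by
        intro t
        have h := pk_hasDerivAt A e1 k t
        rwa [row_succ lc A hA _ k n hk hnN'] at h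
      have hg : ∀ t : ℝ, HasDerivAt (fun t => Real.exp (vk * t) * pvec A e1 t k)
          (Real.exp (vk * t) * (vn * pvec A e1 t j0)) t := by
        intro t
        have hexp : HasDerivAt (fun t : ℝ => Real.exp (vk * t)) (vk * Real.exp (vk * t)) t := by
          have h1 : HasDerivAt (fun t : ℝ => vk * t) vk t := by
            simpa using (hasDerivAt_id t).const_mul vk
          simpa [mul_comm, Function.comp_def] using (Real.hasDerivAt_exp _).comp t h1
        have := hexp.mul (hode t)
        refine this.congr_deriv (Eq.symm ?_)
        ring
      refine ⟨vn * C / (vk - lam'), div_nonneg (mul_nonneg hvn0 hC0) (by linarith), fun _ s hs => ?_⟩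
      have hcont : Continuous (fun t : ℝ => Real.exp (vk * t) * (vn * pvec A e1 t j0)) := by
        exact (Real.continuous_exp.comp (continuous_const.mul continuous_id)).mul
          (continuous_const.mul (pk_continuous A e1 j0))
      have hI : Real.exp (vk * s) * pvec A e1 s k
          = ∫ t in (0:ℝ)..s, Real.exp (vk * t) * (vn * pvec A e1 t j0) := by
        rw [intervalIntegral.integral_eq_sub_of_hasDerivAt (fun t _ => hg t)
          (hcont.intervalIntegrable 0 s)]
        rw [pvec_zero, he1 k, if_neg (by omega)]
        simp
      have hpt : ∀ t ∈ Set.Icc (0:ℝ) s,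
          |Real.exp (vk * t) * (vn * pvec A e1 t j0)| ≤ (vn * C) * Real.exp ((vk - lam') * t) := by
        intro t ht
        rw [abs_mul, abs_mul, abs_of_pos (Real.exp_pos _), abs_of_nonneg hvn0]
        have h1 : |pvec A e1 t j0| ≤ C * Real.exp (-lam' * t) := hbound t ht.1
        calc Real.exp (vk*t) * (vn * |pvec A e1 t j0|)
            ≤ Real.exp (vk*t) * (vn * (C * Real.exp (-lam' * t))) := by
              apply mul_le_mul_of_nonneg_left _ (Real.exp_pos _).le
              exact mul_le_mul_of_nonneg_left h1 hvn0
          _ = (vn * C) * Real.exp ((vk - lam') * t) := by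
              rw [show (vk - lam') * t = vk * t + -lam' * t by ring, Real.exp_add]; ring
      have habs : |∫ t in (0:ℝ)..s, Real.exp (vk * t) * (vn * pvec A e1 t j0)|
          ≤ (vn * C) * (Real.exp ((vk - lam') * s) - 1) / (vk - lam') := by
        calc |∫ t in (0:ℝ)..s, Real.exp (vk * t) * (vn * pvec A e1 t j0)|
            ≤ ∫ t in (0:ℝ)..s, |Real.exp (vk * t) * (vn * pvec A e1 t j0)| :=
              intervalIntegral.abs_integral_le_integral_abs hs
          _ ≤ ∫ t in (0:ℝ)..s, (vn * C) * Real.exp ((vk - lam') * t) := by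
              apply intervalIntegral.integral_mono_on hs
                (hcont.abs.intervalIntegrable 0 s)
                ((continuous_const.mul (Real.continuous_exp.comp (continuous_const.mul continuous_id))).intervalIntegrable 0 s)
                hpt
          _ = (vn * C) * ((Real.exp ((vk - lam') * s) - 1) / (vk - lam')) := by
              rw [intervalIntegral.integral_const_mul, integral_exp_mul_eq _ (by linarith) s]
          _ = (vn * C) * (Real.exp ((vk - lam') * s) - 1) / (vk - lam') := by ring
      have key : |pvec A e1 s k| = Real.exp (-(vk * s)) *
          |Real.exp (vk * s) * pvec A e1 s k| := by
        rw [abs_mul, abs_of_pos (Real.exp_pos _), ← mul_assoc, ← Real.exp_add,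
          neg_add_cancel, Real.exp_zero, one_mul]
      rw [key, hI]
      calc Real.exp (-(vk * s)) * |∫ t in (0:ℝ)..s, Real.exp (vk * t) * (vn * pvec A e1 t j0)|
          ≤ Real.exp (-(vk * s)) * ((vn * C) * (Real.exp ((vk - lam') * s) - 1) / (vk - lam')) :=
            mul_le_mul_of_nonneg_left habs (Real.exp_pos _).le
        _ ≤ Real.exp (-(vk * s)) * ((vn * C) * Real.exp ((vk - lam') * s) / (vk - lam')) := by
            apply mul_le_mul_of_nonneg_left _ (Real.exp_pos _).le
            apply div_le_div_of_nonneg_right ?_ (by linarith)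
            nlinarith [Real.exp_pos ((vk - lam') * s), mul_nonneg hvn0 hC0]
        _ = (vn * C / (vk - lam')) * Real.exp (-lam' * s) := by
            have h1 : Real.exp (-(vk*s)) * Real.exp ((vk - lam')*s) = Real.exp (-lam'*s) := by
              rw [← Real.exp_add]; congr 1; ring
            rw [← h1]; ring
    · exact ⟨0, le_refl 0, fun h => absurd h hlt⟩

end Decay

section SumTendsto
open Filter Topology
variable {N : ℕ} {lc : ℝ} (A : Matrix (Fin N) (Fin N) ℝ)
    (hA : ∀ i j : Fin N, A i j =
      if (i : ℕ) = (j : ℕ) then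
        -((((i : ℕ) : ℝ) + 1) * ((N : ℝ) - (((i : ℕ) : ℝ) + 1)) * lc)
      else if (i : ℕ) = (j : ℕ) + 1 then
        (((j : ℕ) : ℝ) + 1) * ((N : ℝ) - (((j : ℕ) : ℝ) + 1)) * lc
      else 0)
    (e1 : Fin N → ℝ) (he1 : ∀ j : Fin N, e1 j = if (j : ℕ) = 0 then 1 else 0)
    (hN : 2 ≤ N) (hlc : 0 < lc)

include hA in
lemma mulVec_sum_zero (x : Fin N → ℝ) : ∑ k, (A *ᵥ x) k = 0 := by
  have : ∀ k, (A *ᵥ x) k = ∑ j, A k j * x j := fun k => rfl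
  simp_rw [this]
  rw [Finset.sum_comm]
  have : ∀ j : Fin N, ∑ k, A k j * x j = (∑ k, A k j) * x j := by
    intro j; rw [Finset.sum_mul]
  simp_rw [this, colsum lc A hA]
  simp

include hA he1 hN in
lemma sum_pvec_eq_one (s : ℝ) : ∑ k, pvec A e1 s k = 1 := by
  have hF : ∀ t : ℝ, HasDerivAt (fun t => ∑ k, pvec A e1 t k) 0 t := by
    intro t
    have := HasDerivAt.fun_sum (fun k (_ : k ∈ Finset.univ) => pk_hasDerivAt A e1 k t)
    rwa [mulVec_sum_zero A hA] at this
  have hconst : ∑ k, pvec A e1 s k = ∑ k, pvec A e1 0 k :=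
    is_const_of_deriv_eq_zero (fun t => (hF t).differentiableAt) (fun t => (hF t).deriv) s 0
  rw [hconst, pvec_zero]
  have h0 : (0:ℕ) < N := by omega
  have : ∀ k : Fin N, e1 k = if k = (⟨0, h0⟩ : Fin N) then 1 else 0 := by
    intro k; rw [he1 k]
    congr 1
    simp [Fin.ext_iff]
  simp_rw [this]
  rw [Finset.sum_ite_eq' Finset.univ (⟨0, h0⟩ : Fin N), if_pos (Finset.mem_univ _)]

include hA he1 hN hlc in
lemma pvec_tendsto_zero (k : Fin N) (hk : (k:ℕ) < N - 1) :
    Tendsto (fun s => pvec A e1 s k) atTop (𝓝 0) := by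
  obtain ⟨C, hC0, hCb⟩ := decay A hA e1 he1 hN hlc k
  have hb := hCb hk
  have hg : Tendsto (fun s : ℝ => C * Real.exp (-(((N:ℝ)-1)*lc/2) * s)) atTop (𝓝 (C * 0)) := by
    apply Tendsto.const_mul
    apply Real.tendsto_exp_atBot.comp
    have hneg : -(((N:ℝ)-1)*lc/2) < 0 := by linarith [lam'_pos hlc hN]
    exact Tendsto.const_mul_atTop_of_neg hneg tendsto_id
  rw [mul_zero] at hg
  apply squeeze_zero_norm' _ hg
  filter_upwards [eventually_ge_atTop (0:ℝ)] with s hs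
  exact hb s hs

include hA he1 hN hlc in
lemma pvec_tendsto (k : Fin N) :
    Tendsto (fun s => pvec A e1 s k) atTop (𝓝 (if (k:ℕ) = N - 1 then 1 else 0)) := by
  by_cases hk : (k:ℕ) = N - 1
  · rw [if_pos hk]
    have hrepr : ∀ s : ℝ, pvec A e1 s k = 1 - ∑ j ∈ Finset.univ.erase k, pvec A e1 s j := by
      intro s
      have := sum_pvec_eq_one A hA e1 he1 hN s
      rw [← Finset.add_sum_erase _ _ (Finset.mem_univ k)] at this
      linarith
    simp_rw [hrepr]
    have hsum : Tendsto (fun s => ∑ j ∈ Finset.univ.erase k, pvec A e1 s j) atTop (𝓝 0) := by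
      have : Tendsto (fun s => ∑ j ∈ Finset.univ.erase k, pvec A e1 s j) atTop
          (𝓝 (∑ j ∈ Finset.univ.erase k, 0)) := by
        apply tendsto_finset_sum
        intro j hj
        apply pvec_tendsto_zero A hA e1 he1 hN hlc
        have hjk : j ≠ k := Finset.ne_of_mem_erase hj
        have : (j:ℕ) ≠ N - 1 := by
          intro h; apply hjk; apply Fin.ext; rw [h, hk]
        omega
      simpa using this
    have := (tendsto_const_nhds (x := (1:ℝ)) (f := atTop)).sub hsum
    simpa using this
  · rw [if_neg hk]
    exact pvec_tendsto_zero A hA e1 he1 hN hlc k (by omega)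

end SumTendsto

open Filter Topology

/-- The scalar integral `∫₀^∞ wᵀ A e^{As} e₁ (1 - e^{-2λ_r s}) ds` converges and equals
`1 - wᵀ A (2λ_r I - A)⁻¹ e₁` (computational content of Theorem 3, Infection model). -/
theorem infection_bound_integral (N : ℕ) (hN : 2 ≤ N) (lc lr : ℝ)
    (hlc : 0 < lc) (hlr : 0 < lr)
    (A : Matrix (Fin N) (Fin N) ℝ)
    (hA : ∀ i j : Fin N, A i j =
      if (i : ℕ) = (j : ℕ) then
        -((((i : ℕ) : ℝ) + 1) * ((N : ℝ) - (((i : ℕ) : ℝ) + 1)) * lc)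
      else if (i : ℕ) = (j : ℕ) + 1 then
        (((j : ℕ) : ℝ) + 1) * ((N : ℝ) - (((j : ℕ) : ℝ) + 1)) * lc
      else 0)
    (w : Fin N → ℝ) (hw : ∀ k : Fin N, w k = ((k : ℕ) : ℝ) / ((N : ℝ) - 1))
    (e1 : Fin N → ℝ) (he1 : ∀ j : Fin N, e1 j = if (j : ℕ) = 0 then 1 else 0) :
    IntegrableOn
      (fun s : ℝ =>
        (w ⬝ᵥ (A *ᵥ (NormedSpace.exp (s • A) *ᵥ e1))) * (1 - Real.exp (-(2 * lr) * s)))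
      (Set.Ioi 0) ∧
    ∫ s in Set.Ioi (0 : ℝ),
        (w ⬝ᵥ (A *ᵥ (NormedSpace.exp (s • A) *ᵥ e1))) * (1 - Real.exp (-(2 * lr) * s))
      = 1 - w ⬝ᵥ (A *ᵥ ((((2 * lr) • (1 : Matrix (Fin N) (Fin N) ℝ) - A)⁻¹) *ᵥ e1)) := by
  
  have hNR : (2:ℝ) ≤ (N:ℝ) := by exact_mod_cast hN
  set lam' : ℝ := ((N:ℝ)-1)*lc/2 with hlamdef
  have hlam'pos : 0 < lam' := lam'_pos hlc hN
  set v : Fin N → ℝ := w ᵥ* A with hv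
  set B : Matrix (Fin N) (Fin N) ℝ := (2 * lr) • (1 : Matrix (Fin N) (Fin N) ℝ) - A with hB
  -- B is lower triangular with positive diagonal
  have hBtri : B.BlockTriangular OrderDual.toDual := by
    intro i j hij
    have hij' : (i:ℕ) < (j:ℕ) := hij
    have h1 : ¬ (i:ℕ) = (j:ℕ) := by omega
    have h2 : ¬ (i:ℕ) = (j:ℕ)+1 := by omega
    have h3 : ¬ i = j := by intro h; rw [h] at h1; exact h1 rfl
    simp [hB, Matrix.sub_apply, Matrix.one_apply, hA i j, h1, h2, h3]
  have hBdiag : ∀ i : Fin N, B i i = 2 * lr + nu N lc i := by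
    intro i
    rw [hB]
    simp only [Matrix.sub_apply, Matrix.smul_apply, Matrix.one_apply_eq, smul_eq_mul]
    rw [hA i i, if_pos rfl, nu]
    ring
  have hdet : IsUnit B.det := by
    rw [Matrix.det_of_lowerTriangular B hBtri]
    apply isUnit_iff_ne_zero.mpr
    apply Finset.prod_ne_zero_iff.mpr
    intro i _
    rw [hBdiag i]
    have := nu_nonneg (N := N) (n := i) hlc i.isLt
    positivity
  have hBinvB : B⁻¹ * B = 1 := Matrix.nonsing_inv_mul B hdet
  set c : Fin N → ℝ := v ᵥ* B⁻¹ with hc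
  have hcB : c ᵥ* B = v := by
    rw [hc, Matrix.vecMul_vecMul, hBinvB, Matrix.vecMul_one]
  -- the last column of A vanishes
  have hlastlt : N - 1 < N := by omega
  set klast : Fin N := ⟨N - 1, hlastlt⟩ with hklast
  have hcolA : ∀ i : Fin N, A i klast = 0 := by
    intro i
    rw [hA i klast]
    rcases eq_or_ne (i:ℕ) ((klast:ℕ)) with h | h
    · rw [if_pos h]
      have : ((klast:ℕ):ℝ) + 1 = (N:ℝ) := by
        simp [hklast]
        have : ((N - 1 : ℕ) : ℝ) = (N:ℝ) - 1 := by
          have : (1:ℕ) ≤ N := by omega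
          push_cast [Nat.cast_sub this]; ring
        rw [this]; ring
      rw [h, this]
      ring_nf
    · rw [if_neg h, if_neg (by simp [hklast]; omega)]
  have hvlast : v klast = 0 := by
    rw [hv]
    show ∑ i, w i * A i klast = 0
    simp [hcolA]
  -- p and its properties
  set p : ℝ → Fin N → ℝ := fun s => pvec A e1 s with hp
  -- derivative of the two scalar components
  have hder_w : ∀ s, HasDerivAt (fun t => w ⬝ᵥ p t) (v ⬝ᵥ p s) s := by
    intro s
    have := dot_exp_hasDerivAt A w e1 s
    rwa [Matrix.dotProduct_mulVec] at this
  have hder_c : ∀ s, HasDerivAt (fun t => c ⬝ᵥ p t) ((c ᵥ* A) ⬝ᵥ p s) s := by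
    intro s
    have := dot_exp_hasDerivAt A c e1 s
    rwa [Matrix.dotProduct_mulVec] at this
  -- the potential function G
  set G : ℝ → ℝ := fun s => w ⬝ᵥ p s + Real.exp (-(2*lr) * s) * (c ⬝ᵥ p s) with hG
  set f : ℝ → ℝ := fun s => (v ⬝ᵥ p s) * (1 - Real.exp (-(2*lr) * s)) with hf
  have hGderiv : ∀ s, HasDerivAt G (f s) s := by
    intro s
    have hexp : HasDerivAt (fun t : ℝ => Real.exp (-(2*lr) * t))
        (-(2*lr) * Real.exp (-(2*lr) * s)) s := by
      have h1 : HasDerivAt (fun t : ℝ => -(2*lr) * t) (-(2*lr)) s := by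
        simpa using (hasDerivAt_id s).const_mul (-(2*lr))
      simpa [mul_comm, Function.comp_def] using (Real.hasDerivAt_exp _).comp s h1
    have := (hder_w s).add (hexp.mul (hder_c s))
    refine this.congr_deriv (Eq.symm ?_)
    have hkey : (2*lr) * (c ⬝ᵥ p s) - (c ᵥ* A) ⬝ᵥ p s = v ⬝ᵥ p s := by
      have h2 : c ᵥ* ((2 * lr) • (1 : Matrix (Fin N) (Fin N) ℝ)) = (2*lr) • c := by
        ext j
        simp [Matrix.vecMul, dotProduct, Matrix.smul_apply, Matrix.one_apply, mul_comm]
      have h3 : (c ᵥ* B) ⬝ᵥ p s = (2*lr) * (c ⬝ᵥ p s) - (c ᵥ* A) ⬝ᵥ p s := by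
        rw [hB, Matrix.vecMul_sub, sub_dotProduct, h2, smul_dotProduct]
        simp only [smul_eq_mul]
      rw [← h3, hcB]
    rw [hf]
    simp only
    linear_combination (Real.exp (-(2*lr)*s)) * hkey
  -- continuity
  have hcont_w : Continuous (fun s => w ⬝ᵥ p s) := by
    have h : Differentiable ℝ (fun s => w ⬝ᵥ p s) :=
      fun s => (hder_w s).differentiableAt
    exact h.continuous
  have hcont_c : Continuous (fun s => c ⬝ᵥ p s) := by
    have h : Differentiable ℝ (fun s => c ⬝ᵥ p s) :=
      fun s => (hder_c s).differentiableAt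
    exact h.continuous
  have hder_v : ∀ s, HasDerivAt (fun t => v ⬝ᵥ p t) ((v ᵥ* A) ⬝ᵥ p s) s := by
    intro s
    have := dot_exp_hasDerivAt A v e1 s
    rwa [Matrix.dotProduct_mulVec] at this
  have hcont_v : Continuous (fun s => v ⬝ᵥ p s) := by
    have h : Differentiable ℝ (fun s => v ⬝ᵥ p s) := fun s => (hder_v s).differentiableAt
    exact h.continuous
  have hcontE : Continuous (fun s : ℝ => Real.exp (-(2*lr) * s)) :=
    Real.continuous_exp.comp (continuous_const.mul continuous_id)
  have hcontG : Continuous G := hcont_w.add (hcontE.mul hcont_c)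
  have hcontf : Continuous f := hcont_v.mul (continuous_const.sub hcontE)
  -- uniform decay bound for f
  choose Cf hCf0 hCfb using decay A hA e1 he1 hN hlc
  set D : ℝ := ∑ k, |v k| * Cf k with hD
  have hbound_f : ∀ s ∈ Set.Ioi (0:ℝ), ‖f s‖ ≤ D * Real.exp (-lam' * s) := by
    intro s hs
    have hs0 : (0:ℝ) ≤ s := le_of_lt hs
    have hE01 : 0 < Real.exp (-(2*lr)*s) := Real.exp_pos _
    have hE1 : Real.exp (-(2*lr)*s) ≤ 1 := by
      apply Real.exp_le_one_iff.mpr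
      nlinarith
    have habs1 : |1 - Real.exp (-(2*lr)*s)| ≤ 1 := by
      rw [abs_le]; constructor <;> nlinarith
    have hdot : |v ⬝ᵥ p s| ≤ D * Real.exp (-lam' * s) := by
      have h1 : |v ⬝ᵥ p s| ≤ ∑ k, |v k * p s k| := by
        exact Finset.abs_sum_le_sum_abs _ _
      have h2 : ∀ k : Fin N, |v k * p s k| ≤ (|v k| * Cf k) * Real.exp (-lam' * s) := by
        intro k
        rw [abs_mul]
        by_cases hk : (k:ℕ) < N - 1
        · have := hCfb k hk s hs0
          calc |v k| * |p s k| ≤ |v k| * (Cf k * Real.exp (-lam' * s)) :=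
                mul_le_mul_of_nonneg_left this (abs_nonneg _)
            _ = (|v k| * Cf k) * Real.exp (-lam' * s) := by ring
        · have hkeq : k = klast := by
            apply Fin.ext
            simp only [hklast]
            omega
          rw [hkeq, hvlast]
          simp only [abs_zero, zero_mul]
          positivity
      calc |v ⬝ᵥ p s| ≤ ∑ k, |v k * p s k| := h1
        _ ≤ ∑ k, (|v k| * Cf k) * Real.exp (-lam' * s) := Finset.sum_le_sum (fun k _ => h2 k)
        _ = D * Real.exp (-lam' * s) := by rw [hD, Finset.sum_mul]
    have : ‖f s‖ = |v ⬝ᵥ p s| * |1 - Real.exp (-(2*lr)*s)| := by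
      rw [hf]; simp only [Real.norm_eq_abs, abs_mul]
    rw [this]
    have hD0 : 0 ≤ D * Real.exp (-lam' * s) := le_trans (abs_nonneg _) hdot
    calc |v ⬝ᵥ p s| * |1 - Real.exp (-(2*lr)*s)| ≤ |v ⬝ᵥ p s| * 1 :=
          mul_le_mul_of_nonneg_left habs1 (abs_nonneg _)
      _ = |v ⬝ᵥ p s| := mul_one _
      _ ≤ D * Real.exp (-lam' * s) := hdot
  have hint : IntegrableOn f (Set.Ioi (0:ℝ)) := by
    have hg : IntegrableOn (fun s => D * Real.exp (-lam' * s)) (Set.Ioi (0:ℝ)) :=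
      (exp_neg_integrableOn_Ioi 0 hlam'pos).const_mul D
    apply Integrable.mono' hg (hcontf.aestronglyMeasurable.restrict)
    filter_upwards [ae_restrict_mem measurableSet_Ioi] with s hs
    exact hbound_f s hs
  -- limits
  have hlimE : Tendsto (fun s : ℝ => Real.exp (-(2*lr) * s)) atTop (𝓝 0) := by
    apply Real.tendsto_exp_atBot.comp
    exact Tendsto.const_mul_atTop_of_neg (by nlinarith) tendsto_id
  set L : Fin N → ℝ := fun k => if (k:ℕ) = N - 1 then 1 else 0 with hL
  have hlimdot : ∀ u : Fin N → ℝ, Tendsto (fun s => u ⬝ᵥ p s) atTop (𝓝 (u ⬝ᵥ L)) := by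
    intro u
    have : ∀ s : ℝ, u ⬝ᵥ p s = ∑ k, u k * p s k := fun s => rfl
    simp_rw [this]
    have : u ⬝ᵥ L = ∑ k, u k * L k := rfl
    rw [this]
    apply tendsto_finset_sum
    intro k _
    exact (pvec_tendsto A hA e1 he1 hN hlc k).const_mul (u k)
  have hdotL : ∀ u : Fin N → ℝ, u ⬝ᵥ L = u klast := by
    intro u
    have : ∀ k : Fin N, u k * L k = if k = klast then u k else 0 := by
      intro k
      rw [hL]
      simp only
      by_cases hk : (k:ℕ) = N - 1
      · have : k = klast := by apply Fin.ext; simp [hklast, hk]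
        rw [if_pos hk, if_pos this, mul_one]
      · have : ¬ k = klast := by
          intro h; apply hk; rw [h]
        rw [if_neg hk, if_neg this, mul_zero]
    show ∑ k, u k * L k = u klast
    simp_rw [this]
    rw [Finset.sum_ite_eq' Finset.univ klast, if_pos (Finset.mem_univ _)]
  have hwlast : w klast = 1 := by
    rw [hw]
    have h1 : ((klast:ℕ):ℝ) = (N:ℝ) - 1 := by
      simp only [hklast]
      have : (1:ℕ) ≤ N := by omega
      push_cast [Nat.cast_sub this]
      ring
    rw [h1, div_self (by linarith : (N:ℝ) - 1 ≠ 0)]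
  have hlimG : Tendsto G atTop (𝓝 1) := by
    have h1 : Tendsto (fun s => w ⬝ᵥ p s) atTop (𝓝 1) := by
      have := hlimdot w
      rwa [hdotL w, hwlast] at this
    have h2 : Tendsto (fun s => Real.exp (-(2*lr) * s) * (c ⬝ᵥ p s)) atTop (𝓝 (0 * (c ⬝ᵥ L))) :=
      hlimE.mul (hlimdot c)
    rw [zero_mul] at h2
    have := h1.add h2
    rwa [add_zero] at this
  -- FTC
  have hFTC : ∫ s in Set.Ioi (0:ℝ), f s = 1 - G 0 :=
    integral_Ioi_of_hasDerivAt_of_tendsto (hcontG.continuousWithinAt)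
      (fun x _ => hGderiv x) hint hlimG
  have hwE1 : w ⬝ᵥ e1 = 0 := by
    have h0 : (0:ℕ) < N := by omega
    have : ∀ k : Fin N, w k * e1 k = if k = (⟨0,h0⟩ : Fin N) then w k else 0 := by
      intro k
      rw [he1 k]
      by_cases hk : (k:ℕ) = 0
      · have hk' : k = (⟨0,h0⟩ : Fin N) := by apply Fin.ext; simp [hk]
        rw [if_pos hk, if_pos hk', mul_one]
      · have hk' : ¬ k = (⟨0,h0⟩ : Fin N) := by
          intro h; apply hk; rw [h]
        rw [if_neg hk, if_neg hk', mul_zero]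
    show ∑ k, w k * e1 k = 0
    simp_rw [this]
    rw [Finset.sum_ite_eq' Finset.univ (⟨0,h0⟩ : Fin N), if_pos (Finset.mem_univ _), hw]
    simp
  have hG0 : G 0 = c ⬝ᵥ e1 := by
    rw [hG]
    simp only
    have hp0 : p 0 = e1 := by rw [hp]; simp only; exact pvec_zero A e1
    rw [hp0, hwE1, mul_zero, Real.exp_zero, zero_add, one_mul]
  have hfeq : (fun s : ℝ =>
      (w ⬝ᵥ (A *ᵥ (NormedSpace.exp (s • A) *ᵥ e1))) * (1 - Real.exp (-(2 * lr) * s))) = f := by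
    funext s
    rw [hf]
    simp only
    rw [Matrix.dotProduct_mulVec]
    rfl
  have hRHS : w ⬝ᵥ (A *ᵥ ((((2 * lr) • (1 : Matrix (Fin N) (Fin N) ℝ) - A)⁻¹) *ᵥ e1))
      = c ⬝ᵥ e1 := by
    rw [Matrix.dotProduct_mulVec, Matrix.dotProduct_mulVec]
  constructor
  · rw [hfeq]; exact hint
  · rw [hfeq, hFTC, hG0, hRHS]
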